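/- Under the corner construction, the circle of radius r centered at c is tangent to both polyline edges at the points q₁ and q₂; precisely: ⟪c − q₁, p_i − p_m⟫ = 0, ‖c − q₁‖ = r, ⟪c − q₂, p_f − p_m⟫ = 0, and ‖c − q₂‖ = r. (Core tangency claim underlying Lemma 1 and Corollary 3, and the G¹ continuity of the smoothed path at the tangent points.) -/

import Mathlib

open scoped RealInnerProductSpace

lemma corner_aux (u v : EuclideanSpace ℝ (Fin 2)) (hu : ‖u‖ = 1) (hv : ‖v‖ = 1)
    (α r : ℝ) (huv : ⟪u, v⟫ = Real.cos α) (hα0 : 0 < α) (hαπ : α < Real.pi) (hr : 0 < r) :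
    ⟪(r / Real.sin (α/2)) • (‖u + v‖⁻¹ • (u + v)) - (r / Real.tan (α/2)) • u, u⟫ = 0 ∧
    ‖(r / Real.sin (α/2)) • (‖u + v‖⁻¹ • (u + v)) - (r / Real.tan (α/2)) • u‖ = r := by
  have hst : 0 < Real.sin (α/2) :=
    Real.sin_pos_of_pos_of_lt_pi (by linarith) (by linarith [Real.pi_pos])
  have hct : 0 < Real.cos (α/2) :=
    Real.cos_pos_of_mem_Ioo ⟨by linarith [Real.pi_pos], by linarith⟩
  have htan : Real.tan (α/2) = Real.sin (α/2) / Real.cos (α/2) := Real.tan_eq_sin_div_cos _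
  have hcosα : Real.cos α = 2 * Real.cos (α/2)^2 - 1 := by
    have h := Real.cos_two_mul (α/2)
    rwa [show 2*(α/2) = α by ring] at h
  have hvu : ⟪v, u⟫ = Real.cos α := by rw [real_inner_comm]; exact huv
  have huu : ⟪u, u⟫ = 1 := by rw [real_inner_self_eq_norm_sq, hu]; norm_num
  have hvv : ⟪v, v⟫ = 1 := by rw [real_inner_self_eq_norm_sq, hv]; norm_num
  have hn2 : ‖u + v‖^2 = (2 * Real.cos (α/2))^2 := by
    rw [norm_add_sq_real, hu, hv, huv, hcosα]; ring
  have hn : ‖u + v‖ = 2 * Real.cos (α/2) := by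
    nlinarith [norm_nonneg (u+v)]
  set w := (r / Real.sin (α/2)) • (‖u + v‖⁻¹ • (u + v)) - (r / Real.tan (α/2)) • u with hw
  have hsc : Real.sin (α/2)^2 + Real.cos (α/2)^2 = 1 := Real.sin_sq_add_cos_sq _
  have key1 : ⟪w, u⟫ = 0 := by
    simp only [hw, inner_sub_left, real_inner_smul_left, inner_add_left, huu, hvu, hn, hcosα,
      htan]
    field_simp
    ring
  have key2 : ⟪w, w⟫ = r^2 := by
    simp only [hw, inner_sub_left, inner_sub_right, real_inner_smul_left, real_inner_smul_right,
      inner_add_left, inner_add_right, huu, hvv, huv, hvu, hn, hcosα, htan]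
    field_simp
    linear_combination (-(4:ℝ) * Real.cos (α/2)^2) * hsc
  refine ⟨key1, ?_⟩
  have hw2 : ‖w‖^2 = r^2 := by rw [← real_inner_self_eq_norm_sq]; exact key2
  nlinarith [norm_nonneg w]

/-- tangency claim behind Lemma 1 / Corollary 3: under the corner construction,
the circle of radius `r` centered at `c` is tangent to both polyline edges at `q₁` and `q₂`:
`⟪c − q₁, p_i − p_m⟫ = 0`, `‖c − q₁‖ = r`, `⟪c − q₂, p_f − p_m⟫ = 0`, `‖c − q₂‖ = r`. -/
theorem corner_circle_tangent_at_tangent_points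
    (p_i p_m p_f : EuclideanSpace ℝ (Fin 2))
    (hpi : p_i ≠ p_m) (hpf : p_f ≠ p_m)
    (hncol : ¬ Collinear ℝ ({p_i, p_m, p_f} : Set (EuclideanSpace ℝ (Fin 2))))
    (α : ℝ) (hα : α = EuclideanGeometry.angle p_i p_m p_f)
    (hα0 : 0 < α) (hαπ : α < Real.pi)
    (r : ℝ) (hr : 0 < r)
    (u₁ u₂ : EuclideanSpace ℝ (Fin 2))
    (hu₁ : u₁ = ‖p_i - p_m‖⁻¹ • (p_i - p_m))
    (hu₂ : u₂ = ‖p_f - p_m‖⁻¹ • (p_f - p_m))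
    (l d : ℝ) (hl : l = r / Real.tan (α / 2)) (hd : d = r / Real.sin (α / 2))
    (b : EuclideanSpace ℝ (Fin 2)) (hb : b = ‖u₁ + u₂‖⁻¹ • (u₁ + u₂))
    (c : EuclideanSpace ℝ (Fin 2)) (hc : c = p_m + d • b)
    (q₁ q₂ : EuclideanSpace ℝ (Fin 2))
    (hq₁ : q₁ = p_m + l • u₁) (hq₂ : q₂ = p_m + l • u₂) :
    ⟪c - q₁, p_i - p_m⟫ = 0 ∧ ‖c - q₁‖ = r ∧
    ⟪c - q₂, p_f - p_m⟫ = 0 ∧ ‖c - q₂‖ = r := by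
  have hni : (0:ℝ) < ‖p_i - p_m‖ := by
    rw [norm_pos_iff]; exact sub_ne_zero_of_ne hpi
  have hnf : (0:ℝ) < ‖p_f - p_m‖ := by
    rw [norm_pos_iff]; exact sub_ne_zero_of_ne hpf
  have hu1n : ‖u₁‖ = 1 := by
    rw [hu₁, norm_smul, norm_inv, norm_norm, inv_mul_cancel₀ (ne_of_gt hni)]
  have hu2n : ‖u₂‖ = 1 := by
    rw [hu₂, norm_smul, norm_inv, norm_norm, inv_mul_cancel₀ (ne_of_gt hnf)]
  have hcos : ⟪u₁, u₂⟫ = Real.cos α := by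
    rw [hα, EuclideanGeometry.angle, InnerProductGeometry.cos_angle, hu₁, hu₂,
      real_inner_smul_left, real_inner_smul_right]
    simp only [vsub_eq_sub]
    field_simp
  have hcos' : ⟪u₂, u₁⟫ = Real.cos α := by rw [real_inner_comm]; exact hcos
  have h1 := corner_aux u₁ u₂ hu1n hu2n α r hcos hα0 hαπ hr
  have h2 := corner_aux u₂ u₁ hu2n hu1n α r hcos' hα0 hαπ hr
  have hd1 : c - q₁ = (r / Real.sin (α/2)) • (‖u₁ + u₂‖⁻¹ • (u₁ + u₂)) - (r / Real.tan (α/2)) • u₁ := by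
    rw [hc, hq₁, hb, hd, hl]; abel
  have hd2 : c - q₂ = (r / Real.sin (α/2)) • (‖u₂ + u₁‖⁻¹ • (u₂ + u₁)) - (r / Real.tan (α/2)) • u₂ := by
    rw [hc, hq₂, hb, hd, hl, add_comm u₂ u₁]; abel
  have he1 : p_i - p_m = ‖p_i - p_m‖ • u₁ := by
    rw [hu₁, smul_smul, mul_inv_cancel₀ (ne_of_gt hni), one_smul]
  have he2 : p_f - p_m = ‖p_f - p_m‖ • u₂ := by
    rw [hu₂, smul_smul, mul_inv_cancel₀ (ne_of_gt hnf), one_smul]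
  refine ⟨?_, ?_, ?_, ?_⟩
  · rw [hd1, he1, real_inner_smul_right, h1.1, mul_zero]
  · rw [hd1]; exact h1.2
  · rw [hd2, he2, real_inner_smul_right, h2.1, mul_zero]
  · rw [hd2]; exact h2.2
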